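/- Explicit solution of the ergodic Bellman equation for the geometric OU model: the pair Λ = (1/2)(1-√(1-λ))η₀ + λ(r + (1/(2σ²))((1/2)σ²+α-r)²) and φ(y) = (1/2)(1-√(1-λ))(η₀/σ²)y² - (λ/σ²)((1/2)σ²+α-r)·y satisfies, for all y ∈ ℝ, Λ = (σ²/2)(φ''(y) + (1/(1-λ))φ'(y)²) + λr + (λ/(2(1-λ)))·θ(y)² + φ'(y)·(-(1/(1-λ))η₀y + (λ/(1-λ))((1/2)σ²+α-r)), where θ(y) = (-η₀y + (1/2)σ² + α - r)/σ. -/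

import Mathlib

lemma quad_deriv (A B : ℝ) :
    deriv (fun y : ℝ => A * y ^ 2 + B * y) = fun y => 2 * A * y + B := by
  funext y
  have h1 : HasDerivAt (fun y : ℝ => A * y ^ 2 + B * y) (A * (2 * y) + B) y := by
    have := ((hasDerivAt_pow 2 y).const_mul A).fun_add ((hasDerivAt_id y).const_mul B)
    simpa using this
  have := h1.deriv
  linarith [this]

set_option maxHeartbeats 1000000 in
theorem stmt8 (lam σ η₀ r α : ℝ) (hlam : lam ∈ Set.Ioo (0:ℝ) 1) (hσ : 0 < σ)
    (hη₀ : 0 < η₀)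
    (θ φ : ℝ → ℝ) (Λ : ℝ)
    (hθ : ∀ y, θ y = (-η₀ * y + (1/2) * σ^2 + α - r) / σ)
    (hφ : ∀ y, φ y = (1/2) * (1 - Real.sqrt (1 - lam)) * (η₀ / σ^2) * y^2
        - (lam / σ^2) * ((1/2) * σ^2 + α - r) * y)
    (hΛ : Λ = (1/2) * (1 - Real.sqrt (1 - lam)) * η₀
        + lam * (r + (1/(2*σ^2)) * ((1/2) * σ^2 + α - r)^2)) :
    ∀ y : ℝ, Λ = (σ^2/2) * (deriv (deriv φ) y + (1/(1-lam)) * (deriv φ y)^2)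
      + lam * r + (lam/(2*(1-lam))) * (θ y)^2
      + deriv φ y * (-(1/(1-lam)) * η₀ * y
          + (lam/(1-lam)) * ((1/2)*σ^2 + α - r)) := by
  obtain ⟨h0, h1⟩ := hlam
  set s := Real.sqrt (1 - lam) with hs
  set A : ℝ := (1/2) * (1 - s) * (η₀ / σ^2) with hA
  set B : ℝ := -((lam / σ^2) * ((1/2) * σ^2 + α - r)) with hB
  have hφe : φ = fun y => A * y ^ 2 + B * y := by
    funext y; rw [hφ]; ring
  have hd1 : deriv φ = fun y => 2 * A * y + B := by rw [hφe, quad_deriv]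
  have hd2 : deriv (deriv φ) = fun _ => 2 * A := by
    rw [hd1]
    have := quad_deriv (0 : ℝ) (2 * A * 1)
    funext y
    have h' : HasDerivAt (fun y : ℝ => 2 * A * y + B) (2 * A) y := by
      simpa using ((hasDerivAt_id y).const_mul (2 * A)).add_const B
    exact h'.deriv
  have hs2 : s ^ 2 = 1 - lam := Real.sq_sqrt (by linarith)
  have hσ' : σ ^ 2 ≠ 0 := by positivity
  have hl1 : (1 : ℝ) - lam ≠ 0 := by linarith
  intro y
  rw [hθ, hΛ, hd2]; simp only [hd1, hA, hB]
  have hspos : 0 < s := Real.sqrt_pos.mpr (by linarith)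
  have hsne : s ≠ 0 := ne_of_gt hspos
  clear_value s A B
  clear hφ hθ hΛ hφe hd1 hd2 hs
  have hlam' : lam = 1 - s ^ 2 := by linarith
  subst hlam'
  field_simp
  ring
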